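/- Let b>0, β>0, γ≥0, p∈[0,1) satisfy (1-p)β > b+γ. Then all eigenvalues of the endemic-equilibrium Jacobian of the normalized SIRV system have negative real part. Specifically, with x = sqrt(b²β²p² + 4b⁴ - 4b³β + b²β² + 4bγ³ + 4(3b² - bβ)γ² + 4(3b³ - 2b²β)γ + 2(2b³β - b²β² + 4b²βγ + 2bβγ²)p) (or its appropriate complex continuation when the radicand is negative), the eigenvalues are (-(1-p)βb ± x)/(2(b+γ)), -b, -b, and each has negative real part. -/

import Mathlib

open Polynomial

set_option maxHeartbeats 1000000

private lemma sirv_charpoly_aux (a c r g bc : ℂ) :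
    (!![a, c, 0, 0; r, 0, 0, 0; 0, g, -bc, 0; 0, 0, 0, -bc]).charpoly
      = (X ^ 2 - C a * X + C (-(c * r))) * (X + C bc) ^ 2 := by
  rw [Matrix.charpoly]
  simp [Matrix.det_succ_row_zero, Fin.sum_univ_succ, Matrix.charmatrix_apply,
    Matrix.one_apply, Fin.succAbove, Matrix.diagonal_apply]
  ring

/-- If (1-p)β > b+γ, all eigenvalues of the endemic-equilibrium Jacobian of the
normalized SIRV system have negative real part.  With x any complex square root of
the radicand, the eigenvalues are (-(1-p)βb ± x)/(2(b+γ)), -b, -b, and each has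
negative real part. -/
theorem sirv_endemic_jacobian_eigenvalues
    (b β γ p : ℝ) (hb : 0 < b) (hβ : 0 < β) (hγ : 0 ≤ γ)
    (hp : p ∈ Set.Ico (0:ℝ) 1)
    (hcond : (1 - p) * β > b + γ)
    (J : Matrix (Fin 4) (Fin 4) ℂ)
    (hJ : J = !![(b * β * (p - 1) / (b + γ) : ℂ), -((γ : ℂ) + b), 0, 0;
                 -((b * β * p + b ^ 2 - b * β + b * γ : ℂ)) / ((b : ℂ) + γ), 0, 0, 0;
                 0, (γ : ℂ), -(b : ℂ), 0;
                 0, 0, 0, -(b : ℂ)])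
    (x : ℂ)
    (hx : x ^ 2 = ((b ^ 2 * β ^ 2 * p ^ 2 + 4 * b ^ 4 - 4 * b ^ 3 * β + b ^ 2 * β ^ 2
            + 4 * b * γ ^ 3 + 4 * (3 * b ^ 2 - b * β) * γ ^ 2
            + 4 * (3 * b ^ 3 - 2 * b ^ 2 * β) * γ
            + 2 * (2 * b ^ 3 * β - b ^ 2 * β ^ 2 + 4 * b ^ 2 * β * γ + 2 * b * β * γ ^ 2) * p : ℝ) : ℂ))
    (e₁ e₂ : ℂ)
    (he₁ : e₁ = (-(((1 - p) * β * b : ℝ) : ℂ) - x) / (2 * ((b : ℂ) + γ)))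
    (he₂ : e₂ = (-(((1 - p) * β * b : ℝ) : ℂ) + x) / (2 * ((b : ℂ) + γ))) :
    J.charpoly = (X - C e₁) * (X - C e₂) * (X - C (-(b : ℂ))) ^ 2 ∧
    e₁.re < 0 ∧ e₂.re < 0 ∧ (-(b : ℂ)).re < 0 := by
  obtain ⟨hp0, hp1⟩ := hp
  have hB : (0:ℝ) < b + γ := by linarith
  have hBc : ((b:ℂ) + γ) ≠ 0 := by
    have : ((b + γ : ℝ) : ℂ) ≠ 0 := by exact_mod_cast ne_of_gt hB
    push_cast at this; exact this
  have hTpos : 0 < (1 - p) * β * b := by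
    have h1p : 0 < 1 - p := by linarith
    positivity
  -- key real inequality: radicand < ((1-p)βb)^2
  have hRlt : b ^ 2 * β ^ 2 * p ^ 2 + 4 * b ^ 4 - 4 * b ^ 3 * β + b ^ 2 * β ^ 2
            + 4 * b * γ ^ 3 + 4 * (3 * b ^ 2 - b * β) * γ ^ 2
            + 4 * (3 * b ^ 3 - 2 * b ^ 2 * β) * γ
            + 2 * (2 * b ^ 3 * β - b ^ 2 * β ^ 2 + 4 * b ^ 2 * β * γ + 2 * b * β * γ ^ 2) * p
            < ((1 - p) * β * b) ^ 2 := by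
    have hD : b + γ - (1 - p) * β < 0 := by linarith
    have h4 : 0 < 4 * (b + γ) ^ 2 * b := by positivity
    nlinarith [mul_neg_of_pos_of_neg h4 hD]
  -- facts about x
  have hre : x.re ^ 2 - x.im ^ 2 = b ^ 2 * β ^ 2 * p ^ 2 + 4 * b ^ 4 - 4 * b ^ 3 * β + b ^ 2 * β ^ 2
            + 4 * b * γ ^ 3 + 4 * (3 * b ^ 2 - b * β) * γ ^ 2
            + 4 * (3 * b ^ 3 - 2 * b ^ 2 * β) * γ
            + 2 * (2 * b ^ 3 * β - b ^ 2 * β ^ 2 + 4 * b ^ 2 * β * γ + 2 * b * β * γ ^ 2) * p := by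
    have h := congrArg Complex.re hx
    rw [pow_two, Complex.mul_re, Complex.ofReal_re] at h
    linarith [h]
  have him : x.re * x.im = 0 := by
    have h := congrArg Complex.im hx
    rw [pow_two, Complex.mul_im, Complex.ofReal_im] at h
    linarith
  have hxre2 : x.re ^ 2 < ((1 - p) * β * b) ^ 2 := by
    rcases mul_eq_zero.1 him with h | h
    · rw [h]; nlinarith
    · rw [h] at hre; nlinarith
  have habs : -((1 - p) * β * b) < x.re ∧ x.re < (1 - p) * β * b := by
    constructor <;> nlinarith
  -- real parts of e₁, e₂
  have hden : (2 * ((b:ℂ) + γ)) = ((2 * (b + γ) : ℝ) : ℂ) := by push_cast; ring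
  have he₁re : e₁.re = (-((1 - p) * β * b) - x.re) / (2 * (b + γ)) := by
    rw [he₁, hden, Complex.div_ofReal_re]
    simp
  have he₂re : e₂.re = (-((1 - p) * β * b) + x.re) / (2 * (b + γ)) := by
    rw [he₂, hden, Complex.div_ofReal_re]
    simp
  refine ⟨?_, ?_, ?_, ?_⟩
  · -- characteristic polynomial
    rw [hJ, sirv_charpoly_aux]
    have hsum : e₁ + e₂ = (b : ℂ) * β * ((p:ℂ) - 1) / ((b:ℂ) + γ) := by
      rw [he₁, he₂]
      field_simp
      push_cast
      ring
    have hprod : e₁ * e₂ = -(-((γ : ℂ) + b) *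
        (-((b:ℂ) * β * p + (b:ℂ) ^ 2 - (b:ℂ) * β + (b:ℂ) * γ) / ((b : ℂ) + γ))) := by
      have key : e₁ * e₂ = ((((1 - p) * β * b : ℝ) : ℂ) ^ 2 - x ^ 2) / (4 * ((b:ℂ) + γ) ^ 2) := by
        rw [he₁, he₂]
        field_simp
        ring
      rw [hx] at key
      rw [key]
      field_simp
      push_cast
      ring
    have hquad : (X - C e₁) * (X - C e₂)
        = X ^ 2 - C ((b : ℂ) * β * ((p:ℂ) - 1) / ((b:ℂ) + γ)) * X
          + C (-(-((γ : ℂ) + b) *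
              (-((b:ℂ) * β * p + (b:ℂ) ^ 2 - (b:ℂ) * β + (b:ℂ) * γ) / ((b : ℂ) + γ)))) := by
      rw [← hsum, ← hprod, C_add, C_mul]
      ring
    rw [hquad]
    have hXb : X - C (-(b:ℂ)) = X + C (b:ℂ) := by rw [map_neg]; ring
    rw [hXb]
  · rw [he₁re]
    apply div_neg_of_neg_of_pos
    · linarith [habs.1]
    · linarith
  · rw [he₂re]
    apply div_neg_of_neg_of_pos
    · linarith [habs.2]
    · linarith
  · simp [Complex.neg_re]
    exact_mod_cast hb
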